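/- Let π and β be policies with β(a|z) > 0 for all (z,a), let ρ be an initial probability mass function on Z, and let ε ≥ 0 satisfy D_KL(π(·|z) ‖ β(·|z)) ≤ ε for all z ∈ Z. Then Σ_{z ∈ Z} |d^π(z) − d^β(z)| ≤ (γ/(1−γ)) · √(2ε). -/

import Mathlib

open scoped BigOperators

/-- One application of the state transition matrix `P_μ` induced by policy `μpol`
to a distribution `ρ` over latent states: `(ρ P_μ)(z') = Σ_z ρ(z) Σ_a μ(a|z)·[F(z,a) = z']`. -/
noncomputable def stepDist {Z A : Type*} [Fintype Z] [Fintype A] [DecidableEq Z]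
    (F : Z × A → Z) (μpol : Z → A → ℝ) (ρ : Z → ℝ) : Z → ℝ :=
  fun z' => ∑ z : Z, ρ z * ∑ a : A, μpol z a * (if F (z, a) = z' then (1 : ℝ) else 0)

/-- Discounted occupancy distribution `d^μ(z) = (1−γ) Σ_{t} γ^t (ρ P_μ^t)(z)`. -/
noncomputable def occupancy {Z A : Type*} [Fintype Z] [Fintype A] [DecidableEq Z]
    (F : Z × A → Z) (γ : ℝ) (μpol : Z → A → ℝ) (ρ : Z → ℝ) : Z → ℝ :=
  fun z => (1 - γ) * ∑' t : ℕ, γ ^ t * ((stepDist F μpol)^[t] ρ) z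

/-- Kullback–Leibler divergence between probability mass functions on a finite
type (with the convention `0 · log 0 = 0`, automatic since `Real.log 0 = 0`). -/
noncomputable def klFin {A : Type*} [Fintype A] (p q : A → ℝ) : ℝ :=
  ∑ a : A, p a * Real.log (p a / q a)

set_option linter.unusedSectionVars false
set_option linter.unusedVariables false

section auxCalc

-- log r ≥ 1 - 1/r for r > 0
lemma log_ge {r : ℝ} (hr : 0 < r) : 1 - 1/r ≤ Real.log r := by
  have h := Real.log_le_sub_one_of_pos (show (0:ℝ) < 1/r by positivity)
  rw [Real.log_div one_ne_zero hr.ne', Real.log_one] at h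
  linarith

noncomputable def uf : ℝ → ℝ := fun x => (x+1)*Real.log x - 2*x + 2

lemma uf_hasDeriv {r : ℝ} (hr : 0 < r) :
    HasDerivAt uf (Real.log r + (r+1)*r⁻¹ - 2) r := by
  have h1 := ((hasDerivAt_id r).add_const 1).mul (Real.hasDerivAt_log hr.ne')
  have h2 := (h1.sub ((hasDerivAt_id r).const_mul 2)).add_const 2
  refine h2.congr_deriv ?_
  simp

lemma uf_deriv_nonneg {r : ℝ} (hr : 0 < r) : 0 ≤ Real.log r + (r+1)*r⁻¹ - 2 := by
  have h := log_ge hr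
  have : (r+1)*r⁻¹ = 1 + 1/r := by field_simp
  rw [this]; linarith

lemma uf_mono {a b : ℝ} (ha : 0 < a) : MonotoneOn uf (Set.Icc a b) := by
  have hdiff : ∀ x ∈ Set.Icc a b, DifferentiableAt ℝ uf x := fun x hx =>
    (uf_hasDeriv (lt_of_lt_of_le ha hx.1)).differentiableAt
  apply monotoneOn_of_deriv_nonneg (convex_Icc a b)
  · exact fun x hx => (hdiff x hx).continuousAt.continuousWithinAt
  · intro x hx
    rw [interior_Icc] at hx
    exact (hdiff x ⟨hx.1.le, hx.2.le⟩).differentiableWithinAt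
  · intro x hx
    rw [interior_Icc] at hx
    have h0 : 0 < x := lt_of_lt_of_le ha hx.1.le
    rw [(uf_hasDeriv h0).deriv]
    exact uf_deriv_nonneg h0

lemma uf_one : uf 1 = 0 := by simp [uf]

lemma uf_nonneg {r : ℝ} (hr : 1 ≤ r) : 0 ≤ uf r := by
  have := uf_mono (a := 1) (b := r) one_pos ⟨le_refl 1, hr⟩ ⟨hr, le_refl r⟩ hr
  rw [uf_one] at this; exact this

lemma uf_nonpos {r : ℝ} (hr0 : 0 < r) (hr : r ≤ 1) : uf r ≤ 0 := by
  have := uf_mono (a := r) (b := 1) hr0 ⟨le_refl r, hr⟩ ⟨hr, le_refl 1⟩ hr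
  rw [uf_one] at this; exact this

noncomputable def gf : ℝ → ℝ := fun x => (x*Real.log x - x + 1)*(2*x+4) - 3*(x-1)^2

lemma gf_hasDeriv {r : ℝ} (hr : 0 < r) : HasDerivAt gf (4 * uf r) r := by
  have hrl : HasDerivAt (fun x : ℝ => x * Real.log x) (Real.log r + 1) r := by
    have := (hasDerivAt_id r).mul (Real.hasDerivAt_log hr.ne')
    refine this.congr_deriv ?_
    field_simp
    simp; ring
  have h1 := ((hrl.sub (hasDerivAt_id r)).add_const 1).mul
    (((hasDerivAt_id r).const_mul 2).add_const 4)
  have h2 := h1.sub ((((hasDerivAt_id r).sub_const 1).pow 2).const_mul 3)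
  refine h2.congr_deriv ?_
  simp [uf]; ring

lemma gf_one : gf 1 = 0 := by simp [gf]

lemma gf_nonneg {r : ℝ} (hr : 0 < r) : 0 ≤ gf r := by
  have hdiff : ∀ x : ℝ, 0 < x → DifferentiableAt ℝ gf x := fun x hx =>
    (gf_hasDeriv hx).differentiableAt
  rcases le_total 1 r with h1 | h1
  · have hmono : MonotoneOn gf (Set.Icc 1 r) := by
      apply monotoneOn_of_deriv_nonneg (convex_Icc 1 r)
      · exact fun x hx => (hdiff x (lt_of_lt_of_le one_pos hx.1)).continuousAt.continuousWithinAt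
      · intro x hx; rw [interior_Icc] at hx
        exact (hdiff x (lt_trans one_pos hx.1)).differentiableWithinAt
      · intro x hx; rw [interior_Icc] at hx
        rw [(gf_hasDeriv (lt_trans one_pos hx.1)).deriv]
        have := uf_nonneg hx.1.le
        linarith
    have := hmono ⟨le_refl 1, h1⟩ ⟨h1, le_refl r⟩ h1
    rw [gf_one] at this; exact this
  · have hanti : AntitoneOn gf (Set.Icc r 1) := by
      apply antitoneOn_of_deriv_nonpos (convex_Icc r 1)
      · exact fun x hx => (hdiff x (lt_of_lt_of_le hr hx.1)).continuousAt.continuousWithinAt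
      · intro x hx; rw [interior_Icc] at hx
        exact (hdiff x (lt_trans hr hx.1)).differentiableWithinAt
      · intro x hx; rw [interior_Icc] at hx
        rw [(gf_hasDeriv (lt_trans hr hx.1)).deriv]
        have := uf_nonpos (lt_trans hr hx.1) hx.2.le
        linarith
    have := hanti ⟨le_refl r, h1⟩ ⟨h1, le_refl 1⟩ h1
    rw [gf_one] at this; exact this

-- pointwise Pinsker ingredient
lemma pointwise_kl {p q : ℝ} (hp : 0 ≤ p) (hq : 0 < q) :
    3*(p-q)^2 ≤ (2*(p+2*q)) * (p * Real.log (p/q) - p + q) := by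
  rcases eq_or_lt_of_le hp with h0 | hp
  · rw [← h0]
    simp [Real.log_zero]
    nlinarith
  · have hr : 0 < p / q := div_pos hp hq
    have hg := gf_nonneg hr
    simp only [gf] at hg
    have hpe : p = q * (p / q) := by field_simp
    set r := p / q with hrdef
    have key : 0 ≤ q^2 * ((r*Real.log r - r + 1)*(2*r+4) - 3*(r-1)^2) :=
      mul_nonneg (sq_nonneg q) hg
    rw [hpe]
    nlinarith [key]

end auxCalc



lemma pinsker_fin {A : Type*} [Fintype A] (p q : A → ℝ)
    (hp0 : ∀ a, 0 ≤ p a) (hp1 : ∑ a : A, p a = 1)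
    (hq0 : ∀ a, 0 < q a) (hq1 : ∑ a : A, q a = 1) :
    ∑ a : A, |p a - q a| ≤ Real.sqrt (2 * klFin p q) := by
  set m : A → ℝ := fun a => (p a + 2 * q a) / 3 with hm
  have hm0 : ∀ a, 0 < m a := fun a => by
    have := hp0 a; have := hq0 a; simp only [hm]; positivity
  have hmsum : ∑ a : A, m a = 1 := by
    simp only [hm]
    rw [← Finset.sum_div, Finset.sum_add_distrib, hp1, ← Finset.mul_sum, hq1]
    norm_num
  -- Cauchy-Schwarz
  have hcs := Finset.sum_mul_sq_le_sq_mul_sq Finset.univ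
    (fun a => |p a - q a| / Real.sqrt (m a)) (fun a => Real.sqrt (m a))
  have hsimp : ∀ a : A, |p a - q a| / Real.sqrt (m a) * Real.sqrt (m a) = |p a - q a| := by
    intro a
    rw [div_mul_cancel₀]
    exact (Real.sqrt_pos.mpr (hm0 a)).ne'
  have hsq : ∀ a : A, (Real.sqrt (m a))^2 = m a := fun a => Real.sq_sqrt (hm0 a).le
  have hdiv : ∀ a : A, (|p a - q a| / Real.sqrt (m a))^2 = (p a - q a)^2 / m a := by
    intro a
    rw [div_pow, sq_abs, hsq]
  simp only [hsimp] at hcs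
  rw [Finset.sum_congr rfl (fun a _ => hdiv a), Finset.sum_congr rfl (fun a _ => hsq a),
    hmsum, mul_one] at hcs
  -- pointwise bound
  have hpt : ∀ a : A, (p a - q a)^2 / m a ≤ 2 * (p a * Real.log (p a / q a) - p a + q a) := by
    intro a
    rw [div_le_iff₀ (hm0 a)]
    have := pointwise_kl (hp0 a) (hq0 a)
    simp only [hm]
    nlinarith [this]
  have hsum2 : ∑ a : A, (p a - q a)^2 / m a ≤ 2 * klFin p q := by
    calc ∑ a : A, (p a - q a)^2 / m a
        ≤ ∑ a : A, 2 * (p a * Real.log (p a / q a) - p a + q a) :=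
          Finset.sum_le_sum (fun a _ => hpt a)
      _ = 2 * klFin p q := by
          simp only [klFin, Finset.mul_sum, mul_sub, mul_add]
          rw [Finset.sum_add_distrib, Finset.sum_sub_distrib, ← Finset.mul_sum,
            ← Finset.mul_sum, ← Finset.mul_sum, hp1, hq1]
          ring
  have habs : 0 ≤ ∑ a : A, |p a - q a| := Finset.sum_nonneg (fun a _ => abs_nonneg _)
  have : (∑ a : A, |p a - q a|)^2 ≤ 2 * klFin p q := le_trans hcs hsum2
  calc ∑ a : A, |p a - q a| = Real.sqrt ((∑ a : A, |p a - q a|)^2) :=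
        (Real.sqrt_sq habs).symm
    _ ≤ Real.sqrt (2 * klFin p q) := Real.sqrt_le_sqrt this



section dyn
variable {Z A : Type*} [Fintype Z] [Fintype A] [DecidableEq Z]
variable (F : Z × A → Z)

lemma kernel_nonneg (μ : Z → A → ℝ) (hμ0 : ∀ z a, 0 ≤ μ z a) (z z' : Z) :
    0 ≤ ∑ a : A, μ z a * (if F (z, a) = z' then (1 : ℝ) else 0) :=
  Finset.sum_nonneg fun a _ => mul_nonneg (hμ0 z a) (by positivity)

lemma kernel_sum (μ : Z → A → ℝ) (hμ1 : ∀ z, ∑ a : A, μ z a = 1) (z : Z) :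
    ∑ z' : Z, ∑ a : A, μ z a * (if F (z, a) = z' then (1 : ℝ) else 0) = 1 := by
  rw [Finset.sum_comm]
  have : ∀ a : A, ∑ z' : Z, μ z a * (if F (z, a) = z' then (1 : ℝ) else 0) = μ z a := by
    intro a
    rw [← Finset.mul_sum, Finset.sum_ite_eq Finset.univ (F (z, a)) (fun _ => (1:ℝ))]
    simp
  rw [Finset.sum_congr rfl (fun a _ => this a), hμ1]

lemma stepDist_nonneg (μ : Z → A → ℝ) (hμ0 : ∀ z a, 0 ≤ μ z a)
    (ρ : Z → ℝ) (hρ : ∀ z, 0 ≤ ρ z) (z' : Z) : 0 ≤ stepDist F μ ρ z' :=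
  Finset.sum_nonneg fun z _ => mul_nonneg (hρ z) (kernel_nonneg F μ hμ0 z z')

lemma stepDist_sum (μ : Z → A → ℝ) (hμ1 : ∀ z, ∑ a : A, μ z a = 1)
    (ρ : Z → ℝ) (hρ1 : ∑ z : Z, ρ z = 1) : ∑ z' : Z, stepDist F μ ρ z' = 1 := by
  unfold stepDist
  rw [Finset.sum_comm]
  have : ∀ z : Z, ∑ z' : Z, ρ z * ∑ a : A, μ z a * (if F (z, a) = z' then (1:ℝ) else 0) = ρ z := by
    intro z
    rw [← Finset.mul_sum, kernel_sum F μ hμ1 z, mul_one]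
  rw [Finset.sum_congr rfl (fun z _ => this z), hρ1]

lemma iter_nonneg (μ : Z → A → ℝ) (hμ0 : ∀ z a, 0 ≤ μ z a)
    (ρ : Z → ℝ) (hρ : ∀ z, 0 ≤ ρ z) (t : ℕ) (z : Z) :
    0 ≤ ((stepDist F μ)^[t] ρ) z := by
  induction t generalizing z with
  | zero => exact hρ z
  | succ n ih =>
    rw [Function.iterate_succ_apply']
    exact stepDist_nonneg F μ hμ0 _ ih z

lemma iter_sum (μ : Z → A → ℝ) (hμ0 : ∀ z a, 0 ≤ μ z a) (hμ1 : ∀ z, ∑ a : A, μ z a = 1)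
    (ρ : Z → ℝ) (hρ : ∀ z, 0 ≤ ρ z) (hρ1 : ∑ z : Z, ρ z = 1) (t : ℕ) :
    ∑ z : Z, ((stepDist F μ)^[t] ρ) z = 1 := by
  induction t with
  | zero => exact hρ1
  | succ n ih =>
    rw [Function.iterate_succ_apply']
    exact stepDist_sum F μ hμ1 _ ih

lemma stepDist_sub (μ : Z → A → ℝ) (x y : Z → ℝ) (z' : Z) :
    stepDist F μ x z' - stepDist F μ y z' = stepDist F μ (fun z => x z - y z) z' := by
  unfold stepDist
  rw [← Finset.sum_sub_distrib]
  congr 1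
  ext z
  ring

lemma contraction (μ : Z → A → ℝ) (hμ0 : ∀ z a, 0 ≤ μ z a) (hμ1 : ∀ z, ∑ a : A, μ z a = 1)
    (v : Z → ℝ) : ∑ z' : Z, |stepDist F μ v z'| ≤ ∑ z : Z, |v z| := by
  have h1 : ∀ z' : Z, |stepDist F μ v z'| ≤
      ∑ z : Z, |v z| * ∑ a : A, μ z a * (if F (z, a) = z' then (1:ℝ) else 0) := by
    intro z'
    refine le_trans (Finset.abs_sum_le_sum_abs _ _) (Finset.sum_le_sum fun z _ => ?_)
    rw [abs_mul, abs_of_nonneg (kernel_nonneg F μ hμ0 z z')]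
  calc ∑ z' : Z, |stepDist F μ v z'|
      ≤ ∑ z' : Z, ∑ z : Z, |v z| * ∑ a : A, μ z a * (if F (z, a) = z' then (1:ℝ) else 0) :=
        Finset.sum_le_sum fun z' _ => h1 z'
    _ = ∑ z : Z, |v z| := by
        rw [Finset.sum_comm]
        refine Finset.sum_congr rfl fun z _ => ?_
        rw [← Finset.mul_sum, kernel_sum F μ hμ1 z, mul_one]

lemma one_step_diff (π β : Z → A → ℝ) (σ : Z → ℝ) (hσ0 : ∀ z, 0 ≤ σ z)
    (hσ1 : ∑ z : Z, σ z = 1) (δ : ℝ) (hδ : ∀ z, ∑ a : A, |π z a - β z a| ≤ δ) :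
    ∑ z' : Z, |stepDist F π σ z' - stepDist F β σ z'| ≤ δ := by
  have hdiff : ∀ z', stepDist F π σ z' - stepDist F β σ z' =
      ∑ z : Z, σ z * ∑ a : A, (π z a - β z a) * (if F (z, a) = z' then (1:ℝ) else 0) := by
    intro z'
    unfold stepDist
    rw [← Finset.sum_sub_distrib]
    refine Finset.sum_congr rfl fun z _ => ?_
    rw [← mul_sub, ← Finset.sum_sub_distrib]
    congr 1
    refine Finset.sum_congr rfl fun a _ => ?_
    ring
  have hbound : ∀ z', |stepDist F π σ z' - stepDist F β σ z'| ≤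
      ∑ z : Z, σ z * ∑ a : A, |π z a - β z a| * (if F (z, a) = z' then (1:ℝ) else 0) := by
    intro z'
    rw [hdiff z']
    refine le_trans (Finset.abs_sum_le_sum_abs _ _) (Finset.sum_le_sum fun z _ => ?_)
    rw [abs_mul, abs_of_nonneg (hσ0 z)]
    refine mul_le_mul_of_nonneg_left ?_ (hσ0 z)
    refine le_trans (Finset.abs_sum_le_sum_abs _ _) (Finset.sum_le_sum fun a _ => ?_)
    rw [abs_mul]
    refine mul_le_mul_of_nonneg_left ?_ (abs_nonneg _)
    split <;> simp
  calc ∑ z' : Z, |stepDist F π σ z' - stepDist F β σ z'|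
      ≤ ∑ z' : Z, ∑ z : Z, σ z * ∑ a : A, |π z a - β z a| * (if F (z, a) = z' then (1:ℝ) else 0) :=
        Finset.sum_le_sum fun z' _ => hbound z'
    _ = ∑ z : Z, σ z * ∑ a : A, |π z a - β z a| := by
        rw [Finset.sum_comm]
        refine Finset.sum_congr rfl fun z _ => ?_
        rw [← Finset.mul_sum]
        congr 1
        rw [Finset.sum_comm]
        refine Finset.sum_congr rfl fun a _ => ?_
        rw [← Finset.mul_sum, Finset.sum_ite_eq Finset.univ (F (z, a)) (fun _ => (1:ℝ))]
        simp
    _ ≤ ∑ z : Z, σ z * δ := Finset.sum_le_sum fun z _ =>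
        mul_le_mul_of_nonneg_left (hδ z) (hσ0 z)
    _ = δ := by rw [← Finset.sum_mul, hσ1, one_mul]

lemma iter_diff (π β : Z → A → ℝ)
    (hπ0 : ∀ z a, 0 ≤ π z a) (hπ1 : ∀ z, ∑ a : A, π z a = 1)
    (hβ0 : ∀ z a, 0 ≤ β z a) (hβ1 : ∀ z, ∑ a : A, β z a = 1)
    (ρ : Z → ℝ) (hρ0 : ∀ z, 0 ≤ ρ z) (hρ1 : ∑ z : Z, ρ z = 1)
    (δ : ℝ) (hδ : ∀ z, ∑ a : A, |π z a - β z a| ≤ δ) (t : ℕ) :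
    ∑ z : Z, |((stepDist F π)^[t] ρ) z - ((stepDist F β)^[t] ρ) z| ≤ t * δ := by
  induction t with
  | zero => simp
  | succ n ih =>
    set x := (stepDist F π)^[n] ρ with hx
    set y := (stepDist F β)^[n] ρ with hy
    have hstep : ∀ z : Z, ((stepDist F π)^[n+1] ρ) z - ((stepDist F β)^[n+1] ρ) z =
        (stepDist F π x z - stepDist F π y z) + (stepDist F π y z - stepDist F β y z) := by
      intro z
      rw [Function.iterate_succ_apply', Function.iterate_succ_apply']
      ring
    calc ∑ z : Z, |((stepDist F π)^[n+1] ρ) z - ((stepDist F β)^[n+1] ρ) z|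
        ≤ ∑ z : Z, (|stepDist F π x z - stepDist F π y z| + |stepDist F π y z - stepDist F β y z|) := by
          refine Finset.sum_le_sum fun z _ => ?_
          rw [hstep z]
          exact abs_add_le _ _
      _ = (∑ z : Z, |stepDist F π x z - stepDist F π y z|) +
          ∑ z : Z, |stepDist F π y z - stepDist F β y z| := Finset.sum_add_distrib
      _ ≤ n * δ + δ := by
          refine add_le_add ?_ ?_
          · have heq : ∀ z, stepDist F π x z - stepDist F π y z =
                stepDist F π (fun w => x w - y w) z := fun z => stepDist_sub F π x y z
            calc ∑ z : Z, |stepDist F π x z - stepDist F π y z|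
                = ∑ z : Z, |stepDist F π (fun w => x w - y w) z| := by
                  refine Finset.sum_congr rfl fun z _ => ?_; rw [heq z]
              _ ≤ ∑ z : Z, |x z - y z| := contraction F π hπ0 hπ1 _
              _ ≤ n * δ := ih
          · exact one_step_diff F π β y (iter_nonneg F β hβ0 ρ hρ0 n)
              (iter_sum F β hβ0 hβ1 ρ hρ0 hρ1 n) δ hδ
      _ = ((n+1 : ℕ) : ℝ) * δ := by push_cast; try ring

end dyn


/-- if `D_KL(π(·|z) ‖ β(·|z)) ≤ ε` for all `z`, then
`Σ_z |d^π(z) − d^β(z)| ≤ (γ/(1−γ)) · √(2ε)`. -/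
theorem occupancy_tv_le_sqrt_kl
    {Z A : Type*} [Fintype Z] [Fintype A] [Nonempty Z] [Nonempty A] [DecidableEq Z]
    (F : Z × A → Z) (R : Z × A → ℝ) (γ : ℝ) (hγ0 : 0 < γ) (hγ1 : γ < 1)
    (π β : Z → A → ℝ)
    (hπ0 : ∀ z a, 0 ≤ π z a) (hπ1 : ∀ z, ∑ a : A, π z a = 1)
    (hβ0 : ∀ z a, 0 < β z a) (hβ1 : ∀ z, ∑ a : A, β z a = 1)
    (ρ : Z → ℝ) (hρ0 : ∀ z, 0 ≤ ρ z) (hρ1 : ∑ z : Z, ρ z = 1)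
    (ε : ℝ) (hε : 0 ≤ ε) (hKL : ∀ z, klFin (π z) (β z) ≤ ε) :
    ∑ z : Z, |occupancy F γ π ρ z - occupancy F γ β ρ z| ≤
      (γ / (1 - γ)) * Real.sqrt (2 * ε) := by
  have hγ' : (0:ℝ) ≤ γ := hγ0.le
  have hγn : ‖γ‖ < 1 := by rw [Real.norm_eq_abs, abs_of_nonneg hγ']; exact hγ1
  have h1γ : 0 < 1 - γ := by linarith
  set δ := Real.sqrt (2*ε) with hδdef
  have hδ0 : 0 ≤ δ := Real.sqrt_nonneg _
  have hβ0' : ∀ z a, 0 ≤ β z a := fun z a => (hβ0 z a).le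
  have hδ : ∀ z, ∑ a : A, |π z a - β z a| ≤ δ := by
    intro z
    refine le_trans (pinsker_fin (π z) (β z) (hπ0 z) (hπ1 z) (hβ0 z) (hβ1 z)) ?_
    exact Real.sqrt_le_sqrt (by linarith [hKL z])
  set x := fun t : ℕ => (stepDist F π)^[t] ρ with hxdef
  set y := fun t : ℕ => (stepDist F β)^[t] ρ with hydef
  have hx0 : ∀ t z, 0 ≤ x t z := fun t z => iter_nonneg F π hπ0 ρ hρ0 t z
  have hy0 : ∀ t z, 0 ≤ y t z := fun t z => iter_nonneg F β hβ0' ρ hρ0 t z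
  have hx1 : ∀ t z, x t z ≤ 1 := by
    intro t z
    calc x t z ≤ ∑ w : Z, x t w :=
          Finset.single_le_sum (fun w _ => hx0 t w) (Finset.mem_univ z)
      _ = 1 := iter_sum F π hπ0 hπ1 ρ hρ0 hρ1 t
  have hy1 : ∀ t z, y t z ≤ 1 := by
    intro t z
    calc y t z ≤ ∑ w : Z, y t w :=
          Finset.single_le_sum (fun w _ => hy0 t w) (Finset.mem_univ z)
      _ = 1 := iter_sum F β hβ0' hβ1 ρ hρ0 hρ1 t
  have hgeom : Summable (fun t : ℕ => γ ^ t) := summable_geometric_of_lt_one hγ' hγ1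
  have hsumx : ∀ z, Summable (fun t : ℕ => γ^t * x t z) := by
    intro z
    refine Summable.of_nonneg_of_le (fun t => mul_nonneg (pow_nonneg hγ' t) (hx0 t z))
      (fun t => ?_) hgeom
    nlinarith [hx1 t z, pow_nonneg hγ' t, hx0 t z]
  have hsumy : ∀ z, Summable (fun t : ℕ => γ^t * y t z) := by
    intro z
    refine Summable.of_nonneg_of_le (fun t => mul_nonneg (pow_nonneg hγ' t) (hy0 t z))
      (fun t => ?_) hgeom
    nlinarith [hy1 t z, pow_nonneg hγ' t, hy0 t z]
  have hsumd : ∀ z, Summable (fun t : ℕ => γ^t * |x t z - y t z|) := by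
    intro z
    refine Summable.of_nonneg_of_le (fun t => mul_nonneg (pow_nonneg hγ' t) (abs_nonneg _))
      (fun t => ?_) hgeom
    have habs : |x t z - y t z| ≤ 1 :=
      abs_le.mpr ⟨by linarith [hx0 t z, hy1 t z], by linarith [hx1 t z, hy0 t z]⟩
    nlinarith [pow_nonneg hγ' t, abs_nonneg (x t z - y t z)]
  have hocc : ∀ z, occupancy F γ π ρ z - occupancy F γ β ρ z =
      (1-γ) * ∑' t : ℕ, γ^t * (x t z - y t z) := by
    intro z
    unfold occupancy
    rw [← mul_sub, ← Summable.tsum_sub (hsumx z) (hsumy z)]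
    congr 1
    exact tsum_congr fun t => by ring
  have hTV : ∀ t : ℕ, ∑ z : Z, |x t z - y t z| ≤ t * δ :=
    iter_diff F π β hπ0 hπ1 hβ0' hβ1 ρ hρ0 hρ1 δ hδ
  have hS : Summable (fun t : ℕ => γ^t * ((t : ℝ) * δ)) := by
    have h := (summable_pow_mul_geometric_of_norm_lt_one 1 hγn).mul_right δ
    refine h.congr fun t => ?_
    push_cast
    ring
  have habs : ∀ z, |∑' t : ℕ, γ^t * (x t z - y t z)| ≤ ∑' t : ℕ, γ^t * |x t z - y t z| := by
    intro z
    have h1 : Summable (fun t : ℕ => ‖γ^t * (x t z - y t z)‖) := by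
      refine (hsumd z).congr fun t => ?_
      rw [Real.norm_eq_abs, abs_mul, abs_pow, abs_of_nonneg hγ']
    refine le_trans (norm_tsum_le_tsum_norm h1) (le_of_eq (tsum_congr fun t => ?_))
    rw [Real.norm_eq_abs, abs_mul, abs_pow, abs_of_nonneg hγ']
  have hsumS : Summable (fun t : ℕ => ∑ z : Z, γ^t * |x t z - y t z|) := by
    refine Summable.of_nonneg_of_le
      (fun t => Finset.sum_nonneg fun z _ => mul_nonneg (pow_nonneg hγ' t) (abs_nonneg _))
      (fun t => ?_) hS
    rw [← Finset.mul_sum]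
    exact mul_le_mul_of_nonneg_left (hTV t) (pow_nonneg hγ' t)
  calc ∑ z : Z, |occupancy F γ π ρ z - occupancy F γ β ρ z|
      = (1-γ) * ∑ z : Z, |∑' t : ℕ, γ^t * (x t z - y t z)| := by
        rw [Finset.mul_sum]
        refine Finset.sum_congr rfl fun z _ => ?_
        rw [hocc z, abs_mul, abs_of_nonneg h1γ.le]
    _ ≤ (1-γ) * ∑ z : Z, ∑' t : ℕ, γ^t * |x t z - y t z| :=
        mul_le_mul_of_nonneg_left (Finset.sum_le_sum fun z _ => habs z) h1γ.le
    _ = (1-γ) * ∑' t : ℕ, ∑ z : Z, γ^t * |x t z - y t z| := by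
        rw [Summable.tsum_finsetSum (fun z _ => hsumd z)]
    _ ≤ (1-γ) * ∑' t : ℕ, γ^t * ((t : ℝ) * δ) := by
        refine mul_le_mul_of_nonneg_left (Summable.tsum_le_tsum (fun t => ?_) hsumS hS) h1γ.le
        rw [← Finset.mul_sum]
        exact mul_le_mul_of_nonneg_left (hTV t) (pow_nonneg hγ' t)
    _ = (1-γ) * ((γ / (1-γ)^2) * δ) := by
        congr 1
        rw [show (fun t : ℕ => γ^t * ((t : ℝ) * δ)) = fun t : ℕ => ((t : ℝ) * γ^t) * δ
          from funext fun t => by ring]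
        rw [tsum_mul_right, tsum_coe_mul_geometric_of_norm_lt_one hγn]
    _ = (γ / (1 - γ)) * δ := by
        field_simp
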